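/- Let λ/μ and σ/τ be skew diagrams with equal skew Schur functions. Then they have the same number of nonempty columns: the number of integers j such that (i,j) ∈ λ/μ for some i equals the number of integers j such that (i,j) ∈ σ/τ for some i. -/

import Mathlib

open scoped Classical

/-- A cell of the plane: (row, column), rows increasing southwards. -/
abbrev Cell := ℤ × ℤ

/-- A partition as a list: weakly decreasing, all parts positive. -/
def IsPartitionList (l : List ℕ) : Prop := l.Pairwise (· ≥ ·) ∧ ∀ x ∈ l, 0 < x

/-- The cells of the skew diagram λ/μ: {(i,j) : 1 ≤ i ≤ ℓ(λ), μ_i < j ≤ λ_i}. -/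
noncomputable def skewCells (lam mu : List ℕ) : Finset Cell :=
  (Finset.Icc (1 : ℤ) (lam.length : ℤ) ×ˢ Finset.Icc (1 : ℤ) ((lam.foldr max 0 : ℕ) : ℤ)).filter
    (fun c => ((mu.getD ((c.1 - 1).toNat) 0 : ℕ) : ℤ) < c.2 ∧
              c.2 ≤ ((lam.getD ((c.1 - 1).toNat) 0 : ℕ) : ℤ))

/-- A filling `T` of the cells of `D` with entries in `{1,…,n}` (represented by `Fin n`)
is a semistandard Young tableau if rows weakly increase west-to-east and columns
strictly increase north-to-south. -/
def IsSSYT (D : Finset Cell) {n : ℕ} (T : D → Fin n) : Prop :=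
  (∀ c c' : D, (c' : Cell).1 = (c : Cell).1 → (c' : Cell).2 = (c : Cell).2 + 1 → T c ≤ T c') ∧
  (∀ c c' : D, (c' : Cell).1 = (c : Cell).1 + 1 → (c' : Cell).2 = (c : Cell).2 → T c < T c')

/-- The skew Schur polynomial of the diagram `D` in the variables x₁,…,x_n:
the sum over all semistandard Young tableaux of shape `D` of the product of the
variables indexed by the entries. -/
noncomputable def skewSchurPoly (D : Finset Cell) (n : ℕ) : MvPolynomial (Fin n) ℤ :=
  ∑ T : D → Fin n, if IsSSYT D T then ∏ c : D, MvPolynomial.X (T c) else 0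

/-- Two diagrams have equal skew Schur functions if their skew Schur polynomials agree
for every number n ≥ 1 of variables. -/
def SchurEq (D D' : Finset Cell) : Prop :=
  ∀ n : ℕ, 1 ≤ n → skewSchurPoly D n = skewSchurPoly D' n
-- ============ auxiliary lemmas ============

lemma le_foldr_max {l : List ℕ} {x : ℕ} (hx : x ∈ l) : x ≤ l.foldr max 0 := by
  induction l with
  | nil => cases hx
  | cons a t ih =>
    rcases List.mem_cons.1 hx with rfl | h
    · exact le_max_left _ _
    · exact le_trans (ih h) (le_max_right _ _)

lemma getD_anti {l : List ℕ} (hl : IsPartitionList l) {i k : ℕ} (hik : i ≤ k) :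
    l.getD k 0 ≤ l.getD i 0 := by
  by_cases hk : k < l.length
  · have hi : i < l.length := lt_of_le_of_lt hik hk
    rcases eq_or_lt_of_le hik with rfl | h
    · exact le_refl _
    · have := hl.1.rel_get_of_lt (a := ⟨i, hi⟩) (b := ⟨k, hk⟩) h
      rw [List.getD_eq_getElem _ _ hk, List.getD_eq_getElem _ _ hi]
      exact this
  · rw [List.getD_eq_default _ _ (not_lt.1 hk)]
    exact Nat.zero_le _

lemma mem_skewCells {lam mu : List ℕ} {c : Cell} :
    c ∈ skewCells lam mu ↔
      1 ≤ c.1 ∧ c.1 ≤ (lam.length : ℤ) ∧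
      ((mu.getD ((c.1 - 1).toNat) 0 : ℕ) : ℤ) < c.2 ∧
      c.2 ≤ ((lam.getD ((c.1 - 1).toNat) 0 : ℕ) : ℤ) := by
  unfold skewCells
  simp only [Finset.mem_filter, Finset.mem_product, Finset.mem_Icc]
  constructor
  · tauto
  · rintro ⟨h1, h2, h3, h4⟩
    refine ⟨⟨⟨h1, h2⟩, ?_, ?_⟩, h3, h4⟩
    · have : (0 : ℤ) ≤ ((mu.getD ((c.1 - 1).toNat) 0 : ℕ) : ℤ) := Int.ofNat_nonneg _
      omega
    · have hidx : (c.1 - 1).toNat < lam.length := by omega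
      have hmem : lam.getD ((c.1 - 1).toNat) 0 ∈ lam := by
        rw [List.getD_eq_getElem _ _ hidx]; exact List.getElem_mem _
      have := le_foldr_max hmem
      omega

lemma skew_contig {lam mu : List ℕ} (hlam : IsPartitionList lam) (hmu : IsPartitionList mu)
    {i i' k j : ℤ} (h1 : (i, j) ∈ skewCells lam mu) (h2 : (i', j) ∈ skewCells lam mu)
    (hk1 : i ≤ k) (hk2 : k ≤ i') : (k, j) ∈ skewCells lam mu := by
  rw [mem_skewCells] at h1 h2 ⊢
  obtain ⟨a1, a2, a3, a4⟩ := h1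
  obtain ⟨b1, b2, b3, b4⟩ := h2
  refine ⟨by omega, by omega, ?_, ?_⟩
  · have := getD_anti hmu (i := (i - 1).toNat) (k := (k - 1).toNat) (by omega)
    simp only at *
    omega
  · have := getD_anti hlam (i := (k - 1).toNat) (k := (i' - 1).toNat) (by omega)
    simp only at *
    omega

noncomputable def topRow (D : Finset Cell) (j : ℤ) : ℤ :=
  if h : ((D.filter (fun c => c.2 = j)).image Prod.fst).Nonempty then
    Finset.min' _ h else 0

lemma topRow_spec {D : Finset Cell} {i j : ℤ} (h : (i, j) ∈ D) :
    (topRow D j, j) ∈ D ∧ topRow D j ≤ i := by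
  have hm : i ∈ (D.filter (fun c => c.2 = j)).image Prod.fst :=
    Finset.mem_image.2 ⟨(i, j), Finset.mem_filter.2 ⟨h, rfl⟩, rfl⟩
  have hne : ((D.filter (fun c => c.2 = j)).image Prod.fst).Nonempty := ⟨i, hm⟩
  rw [topRow, dif_pos hne]
  constructor
  · have hmin := Finset.min'_mem _ hne
    obtain ⟨⟨c1, c2⟩, hc, hc2⟩ := Finset.mem_image.1 hmin
    obtain ⟨hcD, hcj⟩ := Finset.mem_filter.1 hc
    simp only at hc2 hcj
    rw [← hc2, ← hcj]; exact hcD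
  · exact Finset.min'_le _ _ hm

-- strict increase down columns of an SSYT
lemma ssyt_col_strict_aux {lam mu : List ℕ} (hlam : IsPartitionList lam)
    (hmu : IsPartitionList mu) {n : ℕ} {T : skewCells lam mu → Fin n}
    (hT : IsSSYT _ T) :
    ∀ m : ℕ, ∀ c c' : skewCells lam mu, (c' : Cell).2 = (c : Cell).2 →
      (c' : Cell).1 = (c : Cell).1 + (m + 1) → T c < T c' := by
  intro m
  induction m with
  | zero =>
    intro c c' h2 h1
    exact hT.2 c c' (by omega) h2
  | succ m ih =>
    intro c c' h2 h1
    have hcD : ((c : Cell).1, (c : Cell).2) ∈ skewCells lam mu := by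
      simpa using c.2
    have hc'D : ((c' : Cell).1, (c' : Cell).2) ∈ skewCells lam mu := by
      simpa using c'.2
    have hc'D' : ((c : Cell).1 + (m + 2), (c : Cell).2) ∈ skewCells lam mu := by
      rw [← h2]; rw [show (c : Cell).1 + (m + 2) = (c' : Cell).1 by push_cast [h1]; ring]
      simpa using c'.2
    have hb : ((c : Cell).1 + (m + 1), (c : Cell).2) ∈ skewCells lam mu :=
      skew_contig hlam hmu hcD hc'D' (by omega) (by omega)
    have step1 : T c < T ⟨_, hb⟩ := ih c ⟨_, hb⟩ rfl (by push_cast; ring)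
    have step2 : T ⟨_, hb⟩ < T c' := by
      refine hT.2 ⟨_, hb⟩ c' ?_ ?_
      · show (c' : Cell).1 = (c : Cell).1 + (m + 1) + 1
        push_cast [h1]; ring
      · exact h2
    exact lt_trans step1 step2

lemma ssyt_col_strict {lam mu : List ℕ} (hlam : IsPartitionList lam)
    (hmu : IsPartitionList mu) {n : ℕ} {T : skewCells lam mu → Fin n}
    (hT : IsSSYT _ T) (c c' : skewCells lam mu) (h2 : (c' : Cell).2 = (c : Cell).2)
    (h1 : (c : Cell).1 < (c' : Cell).1) : T c < T c' := by
  have := ssyt_col_strict_aux hlam hmu hT ((c' : Cell).1 - (c : Cell).1 - 1).toNat c c' h2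
    (by omega)
  exact this

noncomputable def contentOf {D : Finset Cell} {n : ℕ} (T : D → Fin n) : Fin n →₀ ℕ :=
  ∑ c : D, Finsupp.single (T c) 1

lemma skewSchurPoly_eq (D : Finset Cell) (n : ℕ) :
    skewSchurPoly D n =
      ∑ T : D → Fin n, if IsSSYT D T then MvPolynomial.monomial (contentOf T) 1 else 0 := by
  unfold skewSchurPoly
  refine Finset.sum_congr rfl fun T _ => ?_
  split
  · rw [contentOf, MvPolynomial.monomial_sum_one]
    exact Finset.prod_congr rfl fun c _ => rfl
  · rfl

lemma coeff_skewSchur (D : Finset Cell) (n : ℕ) (d : Fin n →₀ ℕ) :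
    (skewSchurPoly D n).coeff d =
      ∑ T : D → Fin n, if IsSSYT D T ∧ contentOf T = d then 1 else 0 := by
  rw [skewSchurPoly_eq, MvPolynomial.coeff_sum]
  refine Finset.sum_congr rfl fun T _ => ?_
  by_cases h : IsSSYT D T
  · rw [if_pos h, MvPolynomial.coeff_monomial]
    by_cases h2 : contentOf T = d
    · rw [if_pos h2, if_pos ⟨h, h2⟩]
    · rw [if_neg h2, if_neg (by tauto)]
  · rw [if_neg h, if_neg (by tauto), MvPolynomial.coeff_zero]

lemma contentOf_apply {D : Finset Cell} {n : ℕ} (T : D → Fin n) (v : Fin n) :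
    contentOf T v = (Finset.univ.filter (fun c => T c = v)).card := by
  rw [contentOf, Finsupp.finset_sum_apply, Finset.card_filter]
  refine Finset.sum_congr rfl fun c _ => ?_
  rw [Finsupp.single_apply]

lemma card_val_le {lam mu : List ℕ} (hlam : IsPartitionList lam) (hmu : IsPartitionList mu)
    {n : ℕ} {T : skewCells lam mu → Fin n} (hT : IsSSYT _ T) (v : Fin n) :
    (Finset.univ.filter (fun c => T c = v)).card ≤
      ((skewCells lam mu).image Prod.snd).card := by
  refine Finset.card_le_card_of_injOn (fun c => (c : Cell).2) ?_ ?_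
  · intro c _
    exact Finset.mem_image.2 ⟨(c : Cell), c.2, rfl⟩
  · intro c hc c' hc' hcc
    simp only [Finset.mem_coe, Finset.mem_filter] at hc hc'
    by_contra hne
    have hrow : (c : Cell).1 ≠ (c' : Cell).1 := by
      intro h
      exact hne (Subtype.ext (Prod.ext h hcc))
    rcases lt_or_gt_of_ne hrow with h | h
    · have := ssyt_col_strict hlam hmu hT c c' hcc.symm h
      rw [hc.2, hc'.2] at this
      exact lt_irrefl _ this
    · have := ssyt_col_strict hlam hmu hT c' c hcc h
      rw [hc.2, hc'.2] at this
      exact lt_irrefl _ this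

lemma exists_super (lam mu : List ℕ) (hlam : IsPartitionList lam) (hmu : IsPartitionList mu)
    {n : ℕ} (hn : (skewCells lam mu).card < n) (v : Fin n) (hv : (v : ℕ) = 0) :
    ∃ T : skewCells lam mu → Fin n, IsSSYT _ T ∧
      (Finset.univ.filter (fun c => T c = v)).card =
        ((skewCells lam mu).image Prod.snd).card := by
  have hbound : ∀ c : skewCells lam mu, ((c : Cell).1 - topRow (skewCells lam mu) (c : Cell).2).toNat < n := by
    intro c
    have hcD : ((c : Cell).1, (c : Cell).2) ∈ skewCells lam mu := by simpa using c.2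
    obtain ⟨htop, hle⟩ := topRow_spec hcD
    have hsub : (Finset.Icc (topRow (skewCells lam mu) (c : Cell).2) (c : Cell).1).image
        (fun k => ((k, (c : Cell).2) : Cell)) ⊆ skewCells lam mu := by
      intro x hx
      obtain ⟨k, hk, rfl⟩ := Finset.mem_image.1 hx
      rw [Finset.mem_Icc] at hk
      exact skew_contig hlam hmu htop hcD hk.1 hk.2
    have hcard := Finset.card_le_card hsub
    rw [Finset.card_image_of_injective _ (fun a b h => (Prod.ext_iff.1 h).1),
      Int.card_Icc] at hcard
    omega
  refine ⟨fun c => ⟨((c : Cell).1 - topRow (skewCells lam mu) (c : Cell).2).toNat, hbound c⟩, ⟨?_, ?_⟩, ?_⟩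
  · -- rows weakly increase
    intro c c' h1 h2
    have hcD : ((c : Cell).1, (c : Cell).2) ∈ skewCells lam mu := by simpa using c.2
    have hc'D : ((c : Cell).1, (c : Cell).2 + 1) ∈ skewCells lam mu := by
      rw [← h2, ← h1]; simpa using c'.2
    obtain ⟨htop, hle⟩ := topRow_spec hcD
    obtain ⟨htop', hle'⟩ := topRow_spec hc'D
    -- (topRow (skewCells lam mu) c.2, c.2 + 1) ∈ D
    have hkey : (topRow (skewCells lam mu) (c : Cell).2, (c : Cell).2 + 1) ∈ skewCells lam mu := by
      rw [mem_skewCells] at htop hc'D ⊢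
      simp only at htop hc'D ⊢
      obtain ⟨a1, a2, a3, a4⟩ := htop
      obtain ⟨b1, b2, b3, b4⟩ := hc'D
      refine ⟨a1, a2, by omega, ?_⟩
      have := getD_anti hlam (i := (topRow (skewCells lam mu) (c : Cell).2 - 1).toNat)
        (k := ((c : Cell).1 - 1).toNat) (by omega)
      omega
    have hmono : topRow (skewCells lam mu) ((c : Cell).2 + 1) ≤ topRow (skewCells lam mu) (c : Cell).2 :=
      (topRow_spec hkey).2
    show (⟨_, hbound c⟩ : Fin n) ≤ ⟨_, hbound c'⟩
    rw [Fin.mk_le_mk]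
    rw [h1, h2]
    omega
  · -- columns strictly increase
    intro c c' h1 h2
    have hcD : ((c : Cell).1, (c : Cell).2) ∈ skewCells lam mu := by simpa using c.2
    obtain ⟨htop, hle⟩ := topRow_spec hcD
    show (⟨_, hbound c⟩ : Fin n) < ⟨_, hbound c'⟩
    rw [Fin.mk_lt_mk, h1, h2]
    omega
  · -- content at v equals number of columns
    refine Finset.card_bij (fun c _ => (c : Cell).2) ?_ ?_ ?_
    · intro c _
      exact Finset.mem_image.2 ⟨(c : Cell), c.2, rfl⟩
    · intro c hc c' hc' hcc
      simp only [Finset.mem_filter, Fin.ext_iff, hv] at hc hc'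
      have hcD : ((c : Cell).1, (c : Cell).2) ∈ skewCells lam mu := by simpa using c.2
      have hc'D : ((c' : Cell).1, (c' : Cell).2) ∈ skewCells lam mu := by simpa using c'.2
      have h1 := (topRow_spec hcD).2
      have h2 := (topRow_spec hc'D).2
      apply Subtype.ext
      apply Prod.ext _ hcc
      have e1 : (c : Cell).1 = topRow (skewCells lam mu) (c : Cell).2 := by
        have := hc.2; omega
      have e2 : (c' : Cell).1 = topRow (skewCells lam mu) (c' : Cell).2 := by
        have := hc'.2; omega
      rw [e1, e2, hcc]
    · intro j hj
      obtain ⟨⟨i, j'⟩, hij, hj'⟩ := Finset.mem_image.1 hj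
      simp only at hj'
      subst hj'
      obtain ⟨htop, _⟩ := topRow_spec hij
      refine ⟨⟨(topRow (skewCells lam mu) j', j'), htop⟩, ?_, rfl⟩
      simp only [Finset.mem_filter, Finset.mem_univ, true_and, Fin.ext_iff, hv]
      show ((topRow (skewCells lam mu) j' : ℤ) - topRow (skewCells lam mu) j').toNat = 0
      omega

lemma degreeOf_skewSchur (lam mu : List ℕ) (hlam : IsPartitionList lam)
    (hmu : IsPartitionList mu) {n : ℕ} (hn : (skewCells lam mu).card < n)
    (v : Fin n) (hv : (v : ℕ) = 0) :
    MvPolynomial.degreeOf v (skewSchurPoly (skewCells lam mu) n) =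
      ((skewCells lam mu).image Prod.snd).card := by
  rw [MvPolynomial.degreeOf_eq_sup]
  apply le_antisymm
  · apply Finset.sup_le
    intro d hd
    rw [MvPolynomial.mem_support_iff, coeff_skewSchur] at hd
    obtain ⟨T, -, hT⟩ := Finset.exists_ne_zero_of_sum_ne_zero hd
    have : IsSSYT _ T ∧ contentOf T = d := by
      by_contra h
      rw [if_neg h] at hT
      exact hT rfl
    rw [← this.2, contentOf_apply]
    exact card_val_le hlam hmu this.1 v
  · obtain ⟨T, hT, hcard⟩ := exists_super lam mu hlam hmu hn v hv
    have hmem : contentOf T ∈ (skewSchurPoly (skewCells lam mu) n).support := by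
      rw [MvPolynomial.mem_support_iff, coeff_skewSchur]
      have hpos : (0 : ℤ) <
          ∑ S : skewCells lam mu → Fin n,
            if IsSSYT _ S ∧ contentOf S = contentOf T then 1 else 0 := by
        apply Finset.sum_pos'
        · intro S _
          split <;> norm_num
        · exact ⟨T, Finset.mem_univ _, by rw [if_pos ⟨hT, rfl⟩]; norm_num⟩
      exact ne_of_gt hpos
    have := Finset.le_sup (f := fun m : Fin n →₀ ℕ => m v) hmem
    rw [contentOf_apply, hcard] at this
    exact this


/-- If two skew diagrams have equal skew Schur functions, then they have the same
number of nonempty columns. -/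
theorem equal_skew_schur_implies_equal_cols
    (lam mu sig tau : List ℕ)
    (hlam : IsPartitionList lam) (hmu : IsPartitionList mu)
    (hsig : IsPartitionList sig) (htau : IsPartitionList tau)
    (hml : ∀ i, mu.getD i 0 ≤ lam.getD i 0)
    (hts : ∀ i, tau.getD i 0 ≤ sig.getD i 0)
    (heq : SchurEq (skewCells lam mu) (skewCells sig tau)) :
    ((skewCells lam mu).image Prod.snd).card =
      ((skewCells sig tau).image Prod.snd).card := by

  set n := (skewCells lam mu).card + (skewCells sig tau).card + 1 with hn
  have h1 : (skewCells lam mu).card < n := by omega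
  have h2 : (skewCells sig tau).card < n := by omega
  have hpos : 0 < n := by omega
  set v : Fin n := ⟨0, hpos⟩ with hvdef
  have e1 := degreeOf_skewSchur lam mu hlam hmu h1 v rfl
  have e2 := degreeOf_skewSchur sig tau hsig htau h2 v rfl
  rw [← e1, ← e2, heq n (by omega)]
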